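/- For positive integers p > q ≥ 0, the invariant subring of B = ℂ[x_1,x_2,y_1,y_2] under the torus action (x_1,x_2,y_1,y_2) ↦ (λ^{-p}ω^{-1}x_1, λ^{-p}ω^{-1}x_2, λ^{p+q}ω²y_1, λ^{p-q}y_2) with (λ,ω) ∈ ℂ* × (ℤ/(p−q)ℤ) equals the subalgebra generated by the monomials x_{α_1}x_{α_2}y_1y_2, y_1^p ∏_{ℓ=1}^{p+q} x_{α_ℓ}, and y_2^p ∏_{ℓ=1}^{p−q} x_{α_ℓ}, for all choices of indices α_ℓ ∈ {1,2}. -/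

import Mathlib

open MvPolynomial

namespace Stmt14

noncomputable abbrev B := MvPolynomial (Fin 4) ℂ

/-- `x 0 = x₁`, `x 1 = x₂`. -/
noncomputable def x (j : Fin 2) : B := X ⟨(j : ℕ), by omega⟩
noncomputable def y1 : B := X 2
noncomputable def y2 : B := X 3

/-- The algebra endomorphism of `ℂ[x₁,x₂,y₁,y₂]` scaling the variables by
`(λ^{-p}ω^{-1}, λ^{-p}ω^{-1}, λ^{p+q}ω², λ^{p-q})`. -/
noncomputable def act (p q : ℕ) (u w : ℂˣ) : B →ₐ[ℂ] B :=
  aeval fun i =>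
    (![((u⁻¹ : ℂˣ) : ℂ) ^ p * ((w⁻¹ : ℂˣ) : ℂ),
       ((u⁻¹ : ℂˣ) : ℂ) ^ p * ((w⁻¹ : ℂˣ) : ℂ),
       ((u : ℂˣ) : ℂ) ^ (p + q) * ((w : ℂˣ) : ℂ) ^ 2,
       ((u : ℂˣ) : ℂ) ^ (p - q)] i) • X i

section
variable (p q : ℕ) (u w : ℂˣ)

noncomputable def sx : ℂ := ((u : ℂ))⁻¹ ^ p * ((w : ℂ))⁻¹
noncomputable def sy1 : ℂ := ((u : ℂ)) ^ (p + q) * ((w : ℂ)) ^ 2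
noncomputable def sy2 : ℂ := ((u : ℂ)) ^ (p - q)

lemma act_x (j : Fin 2) : act p q u w (x j) = sx p u w • x j := by
  fin_cases j <;>
    simp [act, x, sx, Units.val_inv_eq_inv_val]

lemma act_y1 : act p q u w y1 = sy1 p q u w • y1 := by
  simp [act, y1, sy1]

lemma act_y2 : act p q u w y2 = sy2 p q u • y2 := by
  simp [act, y2, sy2]


variable {p q u w}

lemma scal0 (hq : q ≤ p) : sx p u w ^ 2 * (sy1 p q u w * sy2 p q u) = 1 := by
  have hu : (u : ℂ) ≠ 0 := u.ne_zero
  have hw0 : (w : ℂ) ≠ 0 := w.ne_zero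
  simp only [sx, sy1, sy2]
  field_simp
  rw [one_div, ← pow_mul, inv_pow, mul_assoc, ← pow_add,
    show p * 2 = (p + q) + (p - q) from by omega, inv_mul_cancel₀ (pow_ne_zero _ hu)]

lemma scal1 (hq : q ≤ p) (hw : (w : ℂ) ^ (p - q) = 1) :
    sy1 p q u w ^ p * sx p u w ^ (p + q) = 1 := by
  have hu : (u : ℂ) ≠ 0 := u.ne_zero
  have hw0 : (w : ℂ) ≠ 0 := w.ne_zero
  simp only [sx, sy1, sy2]
  field_simp
  rw [div_pow, one_div, mul_pow, ← pow_mul, ← pow_mul, ← pow_mul, inv_pow,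
    show 2 * p = (p + q) + (p - q) from by omega, pow_add, hw, mul_one,
    mul_comm (p + q) p]
  field_simp

lemma scal2 (hq : q ≤ p) (hw : (w : ℂ) ^ (p - q) = 1) :
    sy2 p q u ^ p * sx p u w ^ (p - q) = 1 := by
  have hu : (u : ℂ) ≠ 0 := u.ne_zero
  have hw0 : (w : ℂ) ≠ 0 := w.ne_zero
  simp only [sx, sy1, sy2]
  field_simp
  rw [div_pow, hw, div_one, one_div, ← pow_mul, ← pow_mul, inv_pow, mul_comm p (p - q),
    mul_inv_cancel₀ (pow_ne_zero _ hu)]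


lemma act_gen0 (hq : q ≤ p) (α : Fin 2 → Fin 2) :
    act p q u w (x (α 0) * x (α 1) * y1 * y2) = x (α 0) * x (α 1) * y1 * y2 := by
  simp only [map_mul, act_x, act_y1, act_y2, smul_mul_smul_comm, smul_mul_assoc,
    mul_smul_comm, smul_smul]
  rw [show sy2 p q u * (sy1 p q u w * (sx p u w * sx p u w))
      = sx p u w ^ 2 * (sy1 p q u w * sy2 p q u) from by ring, scal0 hq, one_smul]

lemma act_gen1 (hq : q ≤ p) (hw : (w : ℂ) ^ (p - q) = 1) (α : Fin (p + q) → Fin 2) :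
    act p q u w (y1 ^ p * ∏ ℓ, x (α ℓ)) = y1 ^ p * ∏ ℓ, x (α ℓ) := by
  simp only [map_mul, map_pow, map_prod, act_x, act_y1, smul_eq_C_mul, mul_pow,
    Finset.prod_mul_distrib, Finset.prod_const, Finset.card_univ, Fintype.card_fin]
  simp only [← C_pow]
  rw [show ∀ a b c d : B, a * b * (c * d) = (a * c) * (b * d) from fun a b c d => by ring,
    ← map_mul, scal1 hq hw, map_one, one_mul]

lemma act_gen2 (hq : q ≤ p) (hw : (w : ℂ) ^ (p - q) = 1) (α : Fin (p - q) → Fin 2) :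
    act p q u w (y2 ^ p * ∏ ℓ, x (α ℓ)) = y2 ^ p * ∏ ℓ, x (α ℓ) := by
  simp only [map_mul, map_pow, map_prod, act_x, act_y2, smul_eq_C_mul, mul_pow,
    Finset.prod_mul_distrib, Finset.prod_const, Finset.card_univ, Fintype.card_fin]
  simp only [← C_pow]
  rw [show ∀ a b c d : B, a * b * (c * d) = (a * c) * (b * d) from fun a b c d => by ring,
    ← map_mul, scal2 hq hw, map_one, one_mul]


lemma monomial_expand (m : Fin 4 →₀ ℕ) (r : ℂ) :
    (monomial m r : B) = C r * (X 0 ^ m 0 * X 1 ^ m 1 * X 2 ^ m 2 * X 3 ^ m 3) := by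
  rw [monomial_eq, Finsupp.prod_fintype _ _ (fun i => pow_zero _), Fin.prod_univ_four]

lemma x_zero : x 0 = (X 0 : B) := by
  unfold x; norm_num

lemma x_one : x 1 = (X 1 : B) := by
  unfold x; norm_num

lemma act_monomial (m : Fin 4 →₀ ℕ) (r : ℂ) :
    act p q u w (monomial m r) =
      monomial m (r * (sx p u w ^ (m 0 + m 1) * sy1 p q u w ^ m 2 * sy2 p q u ^ m 3)) := by
  have h0 : act p q u w (X 0 : B) = sx p u w • X 0 := by
    have := act_x (p := p) (q := q) (u := u) (w := w) 0
    rwa [x_zero] at this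
  have h1 : act p q u w (X 1 : B) = sx p u w • X 1 := by
    have := act_x (p := p) (q := q) (u := u) (w := w) 1
    rwa [x_one] at this
  have h2 : act p q u w (X 2 : B) = sy1 p q u w • X 2 := act_y1 p q u w
  have h3 : act p q u w (X 3 : B) = sy2 p q u • X 3 := act_y2 p q u w
  rw [monomial_expand, monomial_expand, map_mul, map_mul, map_mul, map_mul, map_pow,
    map_pow, map_pow, map_pow, h0, h1, h2, h3]
  have hC : act p q u w (C r) = C r := by
    simpa using (act p q u w).commutes r
  rw [hC]
  simp only [smul_pow, smul_eq_C_mul, pow_add, C_mul, C_pow]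
  ring

lemma coeff_act (f : B) (m : Fin 4 →₀ ℕ) :
    coeff m (act p q u w f) =
      (sx p u w ^ (m 0 + m 1) * sy1 p q u w ^ m 2 * sy2 p q u ^ m 3) * coeff m f := by
  conv_lhs => rw [f.as_sum]
  rw [map_sum, coeff_sum]
  simp only [act_monomial, coeff_monomial]
  rw [Finset.sum_ite_eq' f.support m]
  split_ifs with h
  · ring
  · rw [notMem_support_iff.mp h, mul_zero]

lemma scal_eq_one {f : B} (hf : ∀ (u w : ℂˣ), ((w : ℂ)) ^ (p - q) = 1 → act p q u w f = f)
    {m : Fin 4 →₀ ℕ} (hm : m ∈ f.support) (u w : ℂˣ) (hw : ((w : ℂ)) ^ (p - q) = 1) :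
    sx p u w ^ (m 0 + m 1) * sy1 p q u w ^ m 2 * sy2 p q u ^ m 3 = 1 := by
  have h := congrArg (coeff m) (hf u w hw)
  rw [coeff_act] at h
  have hc : coeff m f ≠ 0 := mem_support_iff.mp hm
  field_simp at h
  exact h


lemma conds (hpq : q < p) {n c d : ℕ}
    (H : ∀ (u w : ℂˣ), ((w : ℂ)) ^ (p - q) = 1 →
      sx p u w ^ n * sy1 p q u w ^ c * sy2 p q u ^ d = 1) :
    p * n = (p + q) * c + (p - q) * d ∧ ((p - q : ℕ) : ℤ) ∣ (n : ℤ) - 2 * c := by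
  constructor
  · have h2 := H (Units.mk0 2 two_ne_zero) 1 (by simp)
    simp only [sx, sy1, sy2, Units.val_mk0, Units.val_one, inv_one, mul_one, one_pow] at h2
    rw [inv_pow, ← pow_mul, ← pow_mul, inv_pow, ← pow_mul, mul_assoc, ← pow_add,
      inv_mul_eq_one₀ (pow_ne_zero _ two_ne_zero)] at h2
    have h3 : (2 : ℂ) ^ ((p + q) * c + (p - q) * d) = 2 ^ (p * n) := h2.symm
    have h4 : (2 : ℕ) ^ ((p + q) * c + (p - q) * d) = 2 ^ (p * n) := by exact_mod_cast h3
    exact (Nat.pow_right_injective (le_refl 2) h4).symm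
  · set ζ := Complex.exp (2 * Real.pi * Complex.I / ((p - q : ℕ) : ℂ)) with hζdef
    have hζ : IsPrimitiveRoot ζ (p - q) := Complex.isPrimitiveRoot_exp _ (by omega)
    have hζ0 : ζ ≠ 0 := hζ.ne_zero (by omega)
    have hw' : ((Units.mk0 ζ hζ0 : ℂˣ) : ℂ) ^ (p - q) = 1 := by rw [Units.val_mk0]; exact hζ.pow_eq_one
    have h1 := H 1 (Units.mk0 ζ hζ0) hw'
    simp only [sx, sy1, sy2, Units.val_mk0, Units.val_one, inv_one, one_pow, one_mul,
      mul_one] at h1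
    have key : ζ ^ (2 * c) = ζ ^ n := by
      rw [inv_pow, ← pow_mul, inv_mul_eq_one₀ (pow_ne_zero _ hζ0)] at h1
      exact h1.symm
    rcases le_total n (2 * c) with hle | hle
    · have h5 : ζ ^ (2 * c - n) * ζ ^ n = 1 * ζ ^ n := by
        rw [← pow_add, Nat.sub_add_cancel hle, key, one_mul]
      have h6 := mul_right_cancel₀ (pow_ne_zero n hζ0) h5
      obtain ⟨k, hk⟩ := Int.natCast_dvd_natCast.mpr ((hζ.pow_eq_one_iff_dvd _).mp h6)
      refine ⟨-k, ?_⟩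
      rw [show ((p - q : ℕ) : ℤ) * -k = -(((p - q : ℕ) : ℤ) * k) from by ring, ← hk]
      omega
    · have h5 : ζ ^ (n - 2 * c) * ζ ^ (2 * c) = 1 * ζ ^ (2 * c) := by
        rw [← pow_add, Nat.sub_add_cancel hle, key, one_mul]
      have h6 := mul_right_cancel₀ (pow_ne_zero _ hζ0) h5
      obtain ⟨k, hk⟩ := Int.natCast_dvd_natCast.mpr ((hζ.pow_eq_one_iff_dvd _).mp h6)
      exact ⟨k, by rw [← hk]; omega⟩


lemma arith1 (hpq : q < p) {n c : ℕ} (h1 : p * n = (p + q) * c)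
    (h2 : ((p - q : ℕ) : ℤ) ∣ (n : ℤ) - 2 * c) : ∃ t, c = p * t ∧ n = (p + q) * t := by
  have hp : 0 < p := by omega
  have hgpos : 0 < Nat.gcd p q := Nat.gcd_pos_of_pos_left _ hp
  obtain ⟨g, P, Q, hgp, hpP, hqQ, hco⟩ :
      ∃ g P Q, 0 < g ∧ p = g * P ∧ q = g * Q ∧ Nat.Coprime P Q :=
    ⟨Nat.gcd p q, p / Nat.gcd p q, q / Nat.gcd p q, hgpos,
      (Nat.mul_div_cancel' (Nat.gcd_dvd_left p q)).symm,
      (Nat.mul_div_cancel' (Nat.gcd_dvd_right p q)).symm,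
      Nat.coprime_div_gcd_div_gcd hgpos⟩
  have hPpos : 0 < P := by
    rcases Nat.eq_zero_or_pos P with h | h
    · exfalso; rw [h, mul_zero] at hpP; omega
    · exact h
  have hQP : Q < P := by
    by_contra hc
    push_neg at hc
    have : p ≤ q := by
      calc p = g * P := hpP
        _ ≤ g * Q := Nat.mul_le_mul_left _ hc
        _ = q := hqQ.symm
    omega
  have hco2 : Nat.Coprime P (P + Q) := by
    rw [add_comm]
    exact Nat.coprime_add_self_right.mpr hco
  have h3 : P * n = (P + Q) * c := by
    have h4 : g * (P * n) = g * ((P + Q) * c) := by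
      calc g * (P * n) = (g * P) * n := by ring
        _ = (p + q) * c := by rw [← hpP]; exact h1
        _ = (g * P + g * Q) * c := by rw [← hpP, ← hqQ]
        _ = g * ((P + Q) * c) := by ring
    exact Nat.eq_of_mul_eq_mul_left hgp h4
  have hPc : P ∣ c := by
    refine hco2.dvd_of_dvd_mul_right ?_
    exact ⟨n, by rw [mul_comm c (P + Q)]; exact h3.symm⟩
  obtain ⟨m, hm⟩ := hPc
  have hn : n = (P + Q) * m := by
    have : P * n = P * ((P + Q) * m) := by
      rw [h3, hm]; ring
    exact Nat.eq_of_mul_eq_mul_left hPpos this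
  -- now the divisibility condition
  have hle : n ≤ 2 * c := by
    rw [hn, hm]
    calc (P + Q) * m ≤ (P + P) * m := by
          exact Nat.mul_le_mul_right _ (by omega)
      _ = 2 * (P * m) := by ring
  have h2n : (p - q) ∣ 2 * c - n := by
    have hcast : ((2 * c - n : ℕ) : ℤ) = -((n : ℤ) - 2 * c) := by omega
    have := (dvd_neg.mpr h2)
    rw [← hcast] at this
    exact_mod_cast this
  have hpq' : p - q = g * (P - Q) := by
    zify [hpq.le, hQP.le]
    rw [hpP, hqQ]
    push_cast
    ring
  have hsub : 2 * c - n = (P - Q) * m := by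
    rw [hm, hn, show 2 * (P * m) = (2 * P) * m from by ring, ← Nat.sub_mul,
      show 2 * P - (P + Q) = P - Q from by omega]
  rw [hpq', hsub, mul_comm g (P - Q)] at h2n
  have hgm : g ∣ m := (Nat.mul_dvd_mul_iff_left (show 0 < P - Q from by omega)).mp h2n
  obtain ⟨t, ht⟩ := hgm
  exact ⟨t, by rw [hm, ht, hpP]; ring, by rw [hn, ht, hpP, hqQ]; ring⟩


lemma arith2 (hpq : q < p) {n d : ℕ} (h1 : p * n = (p - q) * d)
    (h2 : (p - q) ∣ n) : ∃ t, d = p * t ∧ n = (p - q) * t := by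
  have hp : 0 < p := by omega
  have hr : 0 < p - q := by omega
  have hgpos : 0 < Nat.gcd p (p - q) := Nat.gcd_pos_of_pos_left _ hp
  obtain ⟨g, P, R, hgp, hpP, hrR, hco⟩ :
      ∃ g P R, 0 < g ∧ p = g * P ∧ p - q = g * R ∧ Nat.Coprime P R :=
    ⟨Nat.gcd p (p - q), p / Nat.gcd p (p - q), (p - q) / Nat.gcd p (p - q), hgpos,
      (Nat.mul_div_cancel' (Nat.gcd_dvd_left _ _)).symm,
      (Nat.mul_div_cancel' (Nat.gcd_dvd_right _ _)).symm,
      Nat.coprime_div_gcd_div_gcd hgpos⟩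
  have hPpos : 0 < P := by
    rcases Nat.eq_zero_or_pos P with h | h
    · exfalso; rw [h, mul_zero] at hpP; omega
    · exact h
  have hRpos : 0 < R := by
    rcases Nat.eq_zero_or_pos R with h | h
    · exfalso; rw [h, mul_zero] at hrR; omega
    · exact h
  have h3 : P * n = R * d := by
    have h4 : g * (P * n) = g * (R * d) := by
      calc g * (P * n) = (g * P) * n := by ring
        _ = (p - q) * d := by rw [← hpP]; exact h1
        _ = g * (R * d) := by rw [hrR]; ring
    exact Nat.eq_of_mul_eq_mul_left hgp h4
  have hPd : P ∣ d := by
    refine hco.dvd_of_dvd_mul_left ?_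
    exact ⟨n, h3.symm⟩
  obtain ⟨m, hm⟩ := hPd
  have hn : n = R * m := by
    have : P * n = P * (R * m) := by rw [h3, hm]; ring
    exact Nat.eq_of_mul_eq_mul_left hPpos this
  rw [hrR, hn] at h2
  have hgm : g ∣ m := by
    rw [mul_comm g R] at h2
    exact (Nat.mul_dvd_mul_iff_left hRpos).mp h2
  obtain ⟨t, ht⟩ := hgm
  exact ⟨t, by rw [hm, ht, hpP]; ring, by rw [hn, ht, hrR]; ring⟩


noncomputable def gens (p q : ℕ) : Set B :=
  {f : B | ∃ α : Fin 2 → Fin 2, f = x (α 0) * x (α 1) * y1 * y2} ∪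
  {f : B | ∃ α : Fin (p + q) → Fin 2, f = y1 ^ p * ∏ ℓ, x (α ℓ)} ∪
  {f : B | ∃ α : Fin (p - q) → Fin 2, f = y2 ^ p * ∏ ℓ, x (α ℓ)}

lemma prodx (a b : ℕ) :
    ∃ α : Fin (a + b) → Fin 2, (∏ ℓ, x (α ℓ)) = x 0 ^ a * x 1 ^ b := by
  refine ⟨Fin.append (fun _ : Fin a => 0) (fun _ : Fin b => 1), ?_⟩
  rw [Fin.prod_univ_add]
  simp [Fin.append_left, Fin.append_right]

lemma gen0_mem {a b : ℕ} (hab : a + b = 2) :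
    x 0 ^ a * x 1 ^ b * y1 * y2 ∈ Algebra.adjoin ℂ (gens p q) := by
  have h := prodx a b
  rw [hab] at h
  obtain ⟨α, hα⟩ := h
  refine Algebra.subset_adjoin (Or.inl (Or.inl ⟨α, ?_⟩))
  rw [← hα, Fin.prod_univ_two]

lemma gen1_mem {a b : ℕ} (hab : a + b = p + q) :
    y1 ^ p * (x 0 ^ a * x 1 ^ b) ∈ Algebra.adjoin ℂ (gens p q) := by
  have h := prodx a b
  rw [hab] at h
  obtain ⟨α, hα⟩ := h
  exact Algebra.subset_adjoin (Or.inl (Or.inr ⟨α, by rw [← hα]⟩))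

lemma gen2_mem {a b : ℕ} (hab : a + b = p - q) :
    y2 ^ p * (x 0 ^ a * x 1 ^ b) ∈ Algebra.adjoin ℂ (gens p q) := by
  have h := prodx a b
  rw [hab] at h
  obtain ⟨α, hα⟩ := h
  exact Algebra.subset_adjoin (Or.inr ⟨α, by rw [← hα]⟩)

lemma key (hpq : q < p) : ∀ N a b c d : ℕ, a + b + c + d ≤ N →
    p * (a + b) = (p + q) * c + (p - q) * d →
    ((p - q : ℕ) : ℤ) ∣ ((a : ℤ) + (b : ℤ)) - 2 * (c : ℤ) →
    x 0 ^ a * x 1 ^ b * y1 ^ c * y2 ^ d ∈ Algebra.adjoin ℂ (gens p q) := by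
  intro N
  induction N with
  | zero =>
    intro a b c d hN he hd
    obtain ⟨rfl, rfl, rfl, rfl⟩ : a = 0 ∧ b = 0 ∧ c = 0 ∧ d = 0 := by omega
    simpa using one_mem (Algebra.adjoin ℂ (gens p q))
  | succ N ih =>
    intro a b c d hN he hd
    by_cases hc : c = 0
    · by_cases hdz : d = 0
      · subst hc; subst hdz
        have hab : a + b = 0 := by
          rcases Nat.mul_eq_zero.mp (by omega : p * (a + b) = 0) with h | h
          · omega
          · exact h
        obtain ⟨rfl, rfl⟩ : a = 0 ∧ b = 0 := by omega
        simpa using one_mem (Algebra.adjoin ℂ (gens p q))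
      · -- c = 0, d ≥ 1
        subst hc
        have he' : p * (a + b) = (p - q) * d := by omega
        have hd' : (p - q) ∣ (a + b) := by
          have : ((p - q : ℕ) : ℤ) ∣ ((a + b : ℕ) : ℤ) := by
            push_cast
            simpa using hd
          exact_mod_cast this
        obtain ⟨t, htd, htn⟩ := arith2 hpq he' hd'
        have ht1 : 1 ≤ t := by
          rcases Nat.eq_zero_or_pos t with h | h
          · exfalso; rw [h, mul_zero] at htd; omega
          · exact h
        have habge : p - q ≤ a + b := by
          rw [htn]
          calc p - q = (p - q) * 1 := by ring
            _ ≤ (p - q) * t := Nat.mul_le_mul_left _ ht1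
        have hdge : p ≤ d := by
          rw [htd]
          calc p = p * 1 := by ring
            _ ≤ p * t := Nat.mul_le_mul_left _ ht1
        set a' := min a (p - q) with ha'
        set b' := (p - q) - a' with hb'
        have hba : a' ≤ a ∧ b' ≤ b ∧ a' + b' = p - q := by omega
        have hsplit : (x 0 : B) ^ a * x 1 ^ b * y1 ^ 0 * y2 ^ d =
            (y2 ^ p * (x 0 ^ a' * x 1 ^ b')) *
              (x 0 ^ (a - a') * x 1 ^ (b - b') * y1 ^ 0 * y2 ^ (d - p)) := by
          rw [show a = a' + (a - a') from by omega, show b = b' + (b - b') from by omega,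
            show d = p + (d - p) from by omega, pow_add, pow_add, pow_add]
          ring_nf
          rw [show a' + (a - a') - a' = a - a' from by omega,
            show b' + (b - b') - b' = b - b' from by omega,
            show p + (d - p) - p = d - p from by omega]
        rw [hsplit]
        have habz : ((a' : ℤ) + (b' : ℤ)) = (p : ℤ) - (q : ℤ) := by omega
        refine mul_mem (gen2_mem hba.2.2) (ih _ _ _ _ (by omega) ?_ ?_)
        · zify [hba.1, hba.2.1, hdge, hpq.le]
          push_cast at he'
          zify [hpq.le] at he'
          linear_combination he' - (p : ℤ) * habz
        · obtain ⟨k, hk⟩ := hd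
          refine ⟨k - 1, ?_⟩
          zify [hba.1, hba.2.1, hpq.le]
          zify [hpq.le] at hk
          linear_combination hk - habz
    · by_cases hdz : d = 0
      · -- d = 0, c ≥ 1
        subst hdz
        have he' : p * (a + b) = (p + q) * c := by omega
        obtain ⟨t, htc, htn⟩ := arith1 hpq he' (by simpa using hd)
        have ht1 : 1 ≤ t := by
          rcases Nat.eq_zero_or_pos t with h | h
          · exfalso; rw [h, mul_zero] at htc; omega
          · exact h
        have habge : p + q ≤ a + b := by
          rw [htn]
          calc p + q = (p + q) * 1 := by ring
            _ ≤ (p + q) * t := Nat.mul_le_mul_left _ ht1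
        have hcge : p ≤ c := by
          rw [htc]
          calc p = p * 1 := by ring
            _ ≤ p * t := Nat.mul_le_mul_left _ ht1
        set a' := min a (p + q) with ha'
        set b' := (p + q) - a' with hb'
        have hba : a' ≤ a ∧ b' ≤ b ∧ a' + b' = p + q := by omega
        have hsplit : (x 0 : B) ^ a * x 1 ^ b * y1 ^ c * y2 ^ 0 =
            (y1 ^ p * (x 0 ^ a' * x 1 ^ b')) *
              (x 0 ^ (a - a') * x 1 ^ (b - b') * y1 ^ (c - p) * y2 ^ 0) := by
          rw [show a = a' + (a - a') from by omega, show b = b' + (b - b') from by omega,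
            show c = p + (c - p) from by omega, pow_add, pow_add, pow_add]
          ring_nf
          rw [show a' + (a - a') - a' = a - a' from by omega,
            show b' + (b - b') - b' = b - b' from by omega,
            show p + (c - p) - p = c - p from by omega]
        rw [hsplit]
        have habz : ((a' : ℤ) + (b' : ℤ)) = (p : ℤ) + (q : ℤ) := by omega
        refine mul_mem (gen1_mem hba.2.2) (ih _ _ _ _ (by omega) ?_ ?_)
        · zify [hba.1, hba.2.1, hcge, hpq.le]
          have he'' : (p : ℤ) * ((a : ℤ) + b) = ((p : ℤ) + q) * c := by exact_mod_cast he'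
          linear_combination he'' - (p : ℤ) * habz
        · obtain ⟨k, hk⟩ := hd
          refine ⟨k + 1, ?_⟩
          zify [hba.1, hba.2.1, hcge, hpq.le]
          zify [hpq.le] at hk
          linear_combination hk - habz
      · -- c ≥ 1 and d ≥ 1
        have hab2 : 2 ≤ a + b := by
          have h2p : p * 2 ≤ p * (a + b) := by
            rw [he]
            have : p * 2 = (p + q) * 1 + (p - q) * 1 := by omega
            rw [this]
            exact Nat.add_le_add (Nat.mul_le_mul_left _ (by omega))
              (Nat.mul_le_mul_left _ (by omega))
          exact Nat.le_of_mul_le_mul_left h2p (by omega)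
        set a' := min a 2 with ha'
        set b' := 2 - a' with hb'
        have hba : a' ≤ a ∧ b' ≤ b ∧ a' + b' = 2 := by omega
        have hsplit : (x 0 : B) ^ a * x 1 ^ b * y1 ^ c * y2 ^ d =
            (x 0 ^ a' * x 1 ^ b' * y1 * y2) *
              (x 0 ^ (a - a') * x 1 ^ (b - b') * y1 ^ (c - 1) * y2 ^ (d - 1)) := by
          rw [show a = a' + (a - a') from by omega, show b = b' + (b - b') from by omega,
            show c = 1 + (c - 1) from by omega, show d = 1 + (d - 1) from by omega,
            pow_add, pow_add, pow_add, pow_add]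
          ring_nf
          rw [show a' + (a - a') - a' = a - a' from by omega,
            show b' + (b - b') - b' = b - b' from by omega,
            show 1 + (c - 1) - 1 = c - 1 from by omega,
            show 1 + (d - 1) - 1 = d - 1 from by omega]
        rw [hsplit]
        have habz : ((a' : ℤ) + (b' : ℤ)) = 2 := by omega
        refine mul_mem (gen0_mem hba.2.2) (ih _ _ _ _ (by omega) ?_ ?_)
        · zify [hba.1, hba.2.1, (by omega : 1 ≤ c), (by omega : 1 ≤ d), hpq.le]
          zify [hpq.le] at he
          linear_combination he - (p : ℤ) * habz
        · obtain ⟨k, hk⟩ := hd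
          refine ⟨k, ?_⟩
          zify [hba.1, hba.2.1, (by omega : 1 ≤ c), hpq.le]
          zify [hpq.le] at hk
          linear_combination hk - habz



end

/-- For `p > q ≥ 0`, the invariant subring of `B = ℂ[x₁,x₂,y₁,y₂]`
under the torus action `(x₁,x₂,y₁,y₂) ↦ (λ^{-p}ω^{-1}x₁, λ^{-p}ω^{-1}x₂, λ^{p+q}ω²y₁,
λ^{p-q}y₂)`, where `(λ,ω) ∈ ℂ* × ℤ/(p−q)ℤ` (i.e. `ω^{p-q} = 1`), equals the subalgebra
generated by the monomials `x_{α₁}x_{α₂}y₁y₂`, `y₁^p ∏_{ℓ=1}^{p+q} x_{α_ℓ}`, and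
`y₂^p ∏_{ℓ=1}^{p−q} x_{α_ℓ}`, over all choices of indices `α_ℓ ∈ {1,2}`. -/
theorem stmt14 (p q : ℕ) (hpq : q < p) :
    {f : B | ∀ (u w : ℂˣ), ((w : ℂ)) ^ (p - q) = 1 → act p q u w f = f} =
      (Algebra.adjoin ℂ
        ({f : B | ∃ α : Fin 2 → Fin 2, f = x (α 0) * x (α 1) * y1 * y2} ∪
         {f : B | ∃ α : Fin (p + q) → Fin 2, f = y1 ^ p * ∏ ℓ, x (α ℓ)} ∪
         {f : B | ∃ α : Fin (p - q) → Fin 2, f = y2 ^ p * ∏ ℓ, x (α ℓ)}) : Set B) := by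
  apply Set.eq_of_subset_of_subset
  · intro f hf
    show f ∈ Algebra.adjoin ℂ (gens p q)
    have hrw : f = ∑ m ∈ f.support, monomial m (coeff m f) := f.as_sum
    rw [hrw]
    apply Subalgebra.sum_mem
    intro m hm
    have hS := scal_eq_one (p := p) (q := q) hf hm
    obtain ⟨he, hdvd⟩ := conds hpq hS
    have hmem := key hpq (m 0 + m 1 + m 2 + m 3) (m 0) (m 1) (m 2) (m 3) le_rfl he hdvd
    rw [monomial_expand, ← x_zero, ← x_one,
      show (X 2 : B) = y1 from rfl, show (X 3 : B) = y2 from rfl]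
    exact mul_mem (by rw [← MvPolynomial.algebraMap_eq]
                      exact Subalgebra.algebraMap_mem _ _) hmem
  · intro f hf u w hw
    have hf' : f ∈ Algebra.adjoin ℂ (gens p q) := hf
    clear hf
    induction hf' using Algebra.adjoin_induction with
    | mem z hz =>
      rcases hz with (⟨α, rfl⟩ | ⟨α, rfl⟩) | ⟨α, rfl⟩
      · exact act_gen0 hpq.le α
      · exact act_gen1 hpq.le hw α
      · exact act_gen2 hpq.le hw α
    | algebraMap r => exact (act p q u w).commutes r
    | add z₁ z₂ h₁ h₂ ih₁ ih₂ => rw [map_add, ih₁, ih₂]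
    | mul z₁ z₂ h₁ h₂ ih₁ ih₂ => rw [map_mul, ih₁, ih₂]

end Stmt14
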